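/- Let X be a real Banach space whose unit sphere S_X contains a locally uniformly nonsquare point (a point x ∈ S_X for which there exists δ > 0 such that min{‖x + y‖, ‖x − y‖} ≤ 2 − δ for all y ∈ S_X). Then the dual space X* does not have the local diameter two property: there exist Φ ∈ S_{X**} and ε > 0 such that the slice {x* ∈ B_{X*} : Φ(x*) > 1 − ε} of B_{X*} has diameter strictly less than 2. -/

import Mathlib

/-- If the unit sphere of a real Banach space `X` contains a
locally uniformly nonsquare point, then the dual `X*` fails the local diameter
two property: some slice of `B_{X*}` (given by a norm-one functional in the
bidual) has diameter strictly less than 2. -/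
theorem lunsq_point_dual_fails_ld2p
    {X : Type*} [NormedAddCommGroup X] [NormedSpace ℝ X] [CompleteSpace X]
    (h : ∃ x : X, ‖x‖ = 1 ∧
      ∃ δ > 0, ∀ y : X, ‖y‖ = 1 → min ‖x + y‖ ‖x - y‖ ≤ 2 - δ) :
    ∃ Φ : StrongDual ℝ (StrongDual ℝ X), ‖Φ‖ = 1 ∧ ∃ ε > 0,
      Metric.diam {f : StrongDual ℝ X | ‖f‖ ≤ 1 ∧ Φ f > 1 - ε} < 2 := by
  obtain ⟨x, hx, δ0, hδ0, hδ⟩ := h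
  set δ : ℝ := min δ0 1 with hδdef
  have hδpos : 0 < δ := lt_min hδ0 one_pos
  have hδ1 : δ ≤ 1 := min_le_right _ _
  have hkey : ∀ y : X, ‖y‖ = 1 → min ‖x + y‖ ‖x - y‖ ≤ 2 - δ := fun y hy => by
    have h1 := hδ y hy
    have h2 : δ ≤ δ0 := min_le_left _ _
    linarith
  refine ⟨NormedSpace.inclusionInDoubleDualLi ℝ x, ?_, δ / 4, by positivity, ?_⟩
  · rw [(NormedSpace.inclusionInDoubleDualLi ℝ).norm_map]; exact hx
  -- key pairwise bound
  have hpair : ∀ f g : StrongDual ℝ X,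
      (‖f‖ ≤ 1 ∧ NormedSpace.inclusionInDoubleDualLi ℝ x f > 1 - δ / 4) →
      (‖g‖ ≤ 1 ∧ NormedSpace.inclusionInDoubleDualLi ℝ x g > 1 - δ / 4) →
      dist f g ≤ 2 - δ / 2 := by
    intro f g ⟨hf1, hf2⟩ ⟨hg1, hg2⟩
    have hfx : f x > 1 - δ / 4 := hf2
    have hgx : g x > 1 - δ / 4 := hg2
    -- one-sided bound on (f - g) y for unit y
    have hone : ∀ y : X, ‖y‖ = 1 → f y - g y ≤ 2 - δ / 2 := by
      intro y hy
      have hfp : f (x + y) ≤ ‖x + y‖ := by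
        calc f (x + y) ≤ ‖f (x + y)‖ := le_abs_self _
        _ ≤ ‖f‖ * ‖x + y‖ := f.le_opNorm _
        _ ≤ 1 * ‖x + y‖ := by
            exact mul_le_mul_of_nonneg_right hf1 (norm_nonneg _)
        _ = ‖x + y‖ := one_mul _
      have hgm : g (x - y) ≤ ‖x - y‖ := by
        calc g (x - y) ≤ ‖g (x - y)‖ := le_abs_self _
        _ ≤ ‖g‖ * ‖x - y‖ := g.le_opNorm _
        _ ≤ 1 * ‖x - y‖ := by
            exact mul_le_mul_of_nonneg_right hg1 (norm_nonneg _)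
        _ = ‖x - y‖ := one_mul _
      have hsum : ‖x + y‖ + ‖x - y‖ ≤ 4 - δ := by
        rcases min_le_iff.mp (hkey y hy) with hc | hc
        · have : ‖x - y‖ ≤ 2 := by
            have := norm_sub_le x y; rw [hx, hy] at this; linarith
          linarith
        · have : ‖x + y‖ ≤ 2 := by
            have := norm_add_le x y; rw [hx, hy] at this; linarith
          linarith
      have hfa : f (x + y) = f x + f y := map_add f x y
      have hga : g (x - y) = g x - g y := map_sub g x y
      linarith
    rw [dist_eq_norm]
    refine ContinuousLinearMap.opNorm_le_of_unit_norm (by linarith) ?_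
    intro y hy
    have h1 := hone y hy
    have h2 := hone (-y) (by rw [norm_neg, hy])
    simp only [ContinuousLinearMap.sub_apply, map_neg] at *
    rw [Real.norm_eq_abs, abs_le]
    constructor <;> linarith
  refine lt_of_le_of_lt (Metric.diam_le_of_forall_dist_le (C := 2 - δ / 2) (by linarith) ?_) (by linarith)
  intro f hf g hg
  exact hpair f g hf hg
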